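/- A type expression A is a ⊤-variant if and only if A ~ ⊤ (this holds both for ~ being ≅ and for ~ being ≃). -/

import Mathlib

namespace LambdaA

/-! ### Type expressions (de Bruijn representation for `μ`-binders) -/

inductive Ty : Type
  | var : ℕ → Ty
  | arrow : Ty → Ty → Ty
  | box : Ty → Ty
  | mu : Ty → Ty
  deriving DecidableEq

namespace Ty

def rename : (ℕ → ℕ) → Ty → Ty
  | f, var n => var (f n)
  | f, arrow A B => arrow (rename f A) (rename f B)
  | f, box A => box (rename f A)
  | f, mu A => mu (rename (fun n => match n with | 0 => 0 | Nat.succ m => f m + 1) A)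

def shiftUp : Ty → Ty := rename Nat.succ

def subst : (ℕ → Ty) → Ty → Ty
  | σ, var n => σ n
  | σ, arrow A B => arrow (subst σ A) (subst σ B)
  | σ, box A => box (subst σ A)
  | σ, mu A => mu (subst (fun n => match n with | 0 => var 0 | Nat.succ m => shiftUp (σ m)) A)

end Ty

/-- `openT A B`: instantiate the outermost bound variable (index `0`) of the body `A` by `B`. -/
def openT (A B : Ty) : Ty :=
  Ty.subst (fun n => match n with | 0 => B | Nat.succ m => Ty.var m) A

/-- `substFree A X B` is the capture-avoiding substitution `A[B/X]` for the free variable `X`. -/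
def substFree (A : Ty) (X : ℕ) (B : Ty) : Ty :=
  Ty.subst (fun n => if n = X then B else Ty.var n) A

/-- The unfolding `μX.A ↦ A[μX.A/X]` of a recursive type. -/
def unfoldMu (A : Ty) : Ty := openT A (Ty.mu A)

/-- Free occurrence of a type variable in a type expression. -/
def freeInTy : ℕ → Ty → Prop
  | X, .var n => n = X
  | X, .arrow A B => freeInTy X A ∨ freeInTy X B
  | X, .box A => freeInTy X A
  | X, .mu A => freeInTy (X + 1) A

/-- Auxiliary ⊤-variant test.  `tvAux A d t` scans the tail of `A`, where `d` is the number of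
`μ`-binders passed so far and `t` is the number of (outermost) such binders inside which a `•`
has already been encountered.  A variable qualifies iff it is bound by one of the `μ`-binders
and at least one `•` occurs inside that binder. -/
def tvAux : Ty → ℕ → ℕ → Bool
  | .var j, d, t => decide (d - t ≤ j ∧ j < d)
  | .box A, d, _ => tvAux A d d
  | .mu A, d, t => tvAux A (d + 1) t
  | .arrow _ B, d, t => tvAux B d t

/-- `A` is a ⊤-variant. -/
def IsTV (A : Ty) : Prop := tvAux A 0 0 = true

/-- `Proper A X` : the type expression `A` is proper in the (free) variable `X`. -/
def Proper : Ty → ℕ → Prop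
  | .var n, X => n ≠ X
  | .box _, _ => True
  | .arrow A B, X => (Proper A X ∧ Proper B X) ∨ IsTV B
  | .mu A, X => Proper A (X + 1) ∨ IsTV (.mu A)

/-- Well-formed type expressions: every recursive type `μX.A` has `A` proper in `X`. -/
def WF : Ty → Prop
  | .var _ => True
  | .arrow A B => WF A ∧ WF B
  | .box A => WF A
  | .mu A => WF A ∧ Proper A 0

/-- `⊤ = μX.•X`. -/
def tyTop : Ty := .mu (.box (.var 0))

/-- `•ⁿ A`. -/
def boxN (n : ℕ) (A : Ty) : Ty := Ty.box^[n] A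

/-- The equivalences `≅` (`s = false`) and `≃` (`s = true`) on type expressions. -/
inductive TyEq : Bool → Ty → Ty → Prop
  | refl (s : Bool) (A : Ty) : TyEq s A A
  | symm {s : Bool} {A B : Ty} : TyEq s A B → TyEq s B A
  | trans {s : Bool} {A B C : Ty} : TyEq s A B → TyEq s B C → TyEq s A C
  | boxCongr {s : Bool} {A B : Ty} : TyEq s A B → TyEq s (.box A) (.box B)
  | arrowCongr {s : Bool} {A B C D : Ty} :
      TyEq s A C → TyEq s B D → TyEq s (.arrow A B) (.arrow C D)
  | arrowTop (s : Bool) (A : Ty) : TyEq s (.arrow A tyTop) tyTop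
  | fix (s : Bool) (A : Ty) : TyEq s (.mu A) (unfoldMu A)
  | uniq {s : Bool} {A C : Ty} : TyEq s A (openT C A) → Proper C 0 → TyEq s A (.mu C)
  | kl (A B : Ty) : TyEq true (.box (.arrow A B)) (.arrow (.box A) (.box B))

/-! ### Subtyping -/

/-- Subtyping assumptions: finite sets of pairs of type variables. -/
abbrev Assum := Finset (ℕ × ℕ)

/-- Well-formedness of a subtyping assumption: every type variable occurs at most once. -/
def AssumOK (γ : Assum) : Prop :=
  (∀ p ∈ γ, (p : ℕ × ℕ).1 ≠ p.2) ∧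
    ∀ p ∈ γ, ∀ q ∈ γ, p ≠ q →
      (p : ℕ × ℕ).1 ≠ (q : ℕ × ℕ).1 ∧ p.1 ≠ q.2 ∧ p.2 ≠ q.1 ∧ p.2 ≠ q.2

/-- `X` occurs in the subtyping assumption `γ`. -/
def AssumVar (γ : Assum) (X : ℕ) : Prop :=
  ∃ p ∈ γ, (p : ℕ × ℕ).1 = X ∨ (p : ℕ × ℕ).2 = X

/-- Derivability of subtyping judgments `γ ⊢ A ⪯ B`. -/
inductive Sub : Assum → Ty → Ty → Prop
  | assump {γ : Assum} {X Y : ℕ} : AssumOK γ → (X, Y) ∈ γ → Sub γ (.var X) (.var Y)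
  | top {γ : Assum} (A : Ty) : AssumOK γ → Sub γ A tyTop
  | refl {γ : Assum} {A B : Ty} : AssumOK γ → TyEq true A B → Sub γ A B
  | trans {γ₁ γ₂ : Assum} {A B C : Ty} :
      Sub γ₁ A B → Sub γ₂ B C → AssumOK (γ₁ ∪ γ₂) → Sub (γ₁ ∪ γ₂) A C
  | boxMono {γ : Assum} {A B : Ty} : Sub γ A B → Sub γ (.box A) (.box B)
  | arrowMono {γ₁ γ₂ : Assum} {A A' B B' : Ty} :
      Sub γ₁ A' A → Sub γ₂ B B' → AssumOK (γ₁ ∪ γ₂) →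
      Sub (γ₁ ∪ γ₂) (.arrow A B) (.arrow A' B')
  | muMono {γ : Assum} {X Y : ℕ} {A B : Ty} :
      AssumOK (insert (X, Y) γ) →
      Sub (insert (X, Y) γ) (openT A (.var X)) (openT B (.var Y)) →
      ¬ AssumVar γ X → ¬ AssumVar γ Y →
      ¬ freeInTy X (openT B (.var Y)) → ¬ freeInTy Y (openT A (.var X)) →
      Proper (openT A (.var X)) X → Proper (openT B (.var Y)) Y →
      Sub γ (.mu A) (.mu B)
  | approx {γ : Assum} (A : Ty) : AssumOK γ → Sub γ A (.box A)

/-! ### Untyped λ-terms (locally-nameless representation) -/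

inductive Tm : Type
  | bvar : ℕ → Tm
  | fvar : ℕ → Tm
  | lam : Tm → Tm
  | app : Tm → Tm → Tm
  deriving DecidableEq

def openTmAux (N : Tm) : ℕ → Tm → Tm
  | _, .fvar y => .fvar y
  | k, .bvar i => if i = k then N else .bvar i
  | k, .lam M => .lam (openTmAux N (k + 1) M)
  | k, .app M₁ M₂ => .app (openTmAux N k M₁) (openTmAux N k M₂)

/-- Instantiate the outermost bound variable of the body `M` by `N`. -/
def openTm (M N : Tm) : Tm := openTmAux N 0 M

/-- `substTm M x N` is the substitution `M[N/x]` for the free variable `x`. -/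
def substTm : Tm → ℕ → Tm → Tm
  | .bvar i, _, _ => .bvar i
  | .fvar y, x, N => if y = x then N else .fvar y
  | .lam M, x, N => .lam (substTm M x N)
  | .app M₁ M₂, x, N => .app (substTm M₁ x N) (substTm M₂ x N)

/-- Free occurrence of an individual variable in a λ-term. -/
def freeTm : ℕ → Tm → Prop
  | _, .bvar _ => False
  | x, .fvar y => y = x
  | x, .lam M => freeTm x M
  | x, .app M₁ M₂ => freeTm x M₁ ∨ freeTm x M₂

/-- One-step β-reduction. -/
inductive Step : Tm → Tm → Prop
  | beta (M N : Tm) : Step (.app (.lam M) N) (openTm M N)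
  | appL {M M' : Tm} (N : Tm) : Step M M' → Step (.app M N) (.app M' N)
  | appR (M : Tm) {N N' : Tm} : Step N N' → Step (.app M N) (.app M N')
  | lamCongr {M M' : Tm} : Step M M' → Step (.lam M) (.lam M')

/-- `→*β`, the reflexive-transitive closure of β-reduction. -/
def Steps : Tm → Tm → Prop := Relation.ReflTransGen Step

/-- β-convertibility `=β`. -/
inductive BetaEq : Tm → Tm → Prop
  | step {M N : Tm} : Step M N → BetaEq M N
  | refl (M : Tm) : BetaEq M M
  | symm {M N : Tm} : BetaEq M N → BetaEq N M
  | trans {M N K : Tm} : BetaEq M N → BetaEq N K → BetaEq M K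

/-! ### Typing -/

/-- Typing contexts: finite sets of (variable, type) pairs. -/
abbrev Ctx := Finset (ℕ × Ty)

/-- Well-formedness of a typing context (functionality). -/
def CtxOK (Γ : Ctx) : Prop :=
  ∀ p ∈ Γ, ∀ q ∈ Γ, (p : ℕ × Ty).1 = (q : ℕ × Ty).1 → p = q

/-- `•Γ`. -/
def boxCtx (Γ : Ctx) : Ctx := Γ.image fun p => (p.1, Ty.box p.2)

/-- All types in the context are well-formed type expressions. -/
def CtxWF (Γ : Ctx) : Prop := ∀ p ∈ Γ, WF (p : ℕ × Ty).2

/-- The typing system λA. -/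
inductive Typing : Ctx → Tm → Ty → Prop
  | var {Γ : Ctx} {x : ℕ} {A : Ty} : CtxOK Γ → (x, A) ∈ Γ → Typing Γ (.fvar x) A
  | shift {Γ : Ctx} {M : Tm} {A : Ty} : Typing (boxCtx Γ) M (.box A) → Typing Γ M A
  | top {Γ : Ctx} (M : Tm) : CtxOK Γ → Typing Γ M tyTop
  | sub {Γ : Ctx} {M : Tm} {A B : Ty} : Typing Γ M A → Sub ∅ A B → Typing Γ M B
  | lamI {Γ : Ctx} {x : ℕ} {A B : Ty} {M : Tm} :
      ¬ freeTm x M →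
      Typing (insert (x, A) Γ) (openTm M (.fvar x)) B →
      Typing Γ (.lam M) (.arrow A B)
  | appE {Γ₁ Γ₂ : Ctx} {M N : Tm} {A B : Ty} :
      Typing Γ₁ M (.arrow A B) → Typing Γ₂ N A → CtxOK (Γ₁ ∪ Γ₂) →
      Typing (Γ₁ ∪ Γ₂) (.app M N) B

/-! ### Frames, λ-algebras and the semantics of types -/

/-- The accessibility relation is conversely well-founded. -/
def ConverselyWF {W : Type*} (acc : W → W → Prop) : Prop :=
  WellFounded fun q p => acc p q

/-- Local linearity of the accessibility relation. -/
def LocallyLinear {W : Type*} (acc : W → W → Prop) : Prop :=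
  ∀ p q, acc p q → ∃ r, Relation.ReflTransGen acc p r ∧ acc r q ∧
    ∀ s, acc r s → Relation.ReflTransGen acc q s

/-- Hereditary type environments. -/
def Hereditary {W : Type*} {V : Type*} (acc : W → W → Prop) (η : ℕ → W → Set V) : Prop :=
  ∀ X p q, acc p q → η X p ⊆ η X q

/-- Syntactical λ-algebras of the untyped λ-calculus. -/
structure LambdaAlgebra (V : Type*) where
  nonempty : Nonempty V
  ap : V → V → V
  den : Tm → (ℕ → V) → V
  den_fvar : ∀ x ρ, den (.fvar x) ρ = ρ x
  den_app : ∀ M N ρ, den (.app M N) ρ = ap (den M ρ) (den N ρ)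
  den_lam : ∀ M x ρ v, ¬ freeTm x M →
    ap (den (.lam M) ρ) v = den (openTm M (.fvar x)) (Function.update ρ x v)
  den_ext : ∀ M ρ ρ', (∀ x, freeTm x M → ρ x = ρ' x) → den M ρ = den M ρ'
  den_beta : ∀ M N ρ, BetaEq M N → den M ρ = den N ρ

/-- The interpretation `I(A)^η_p` of type expressions over a frame, packaged together with
its defining (recursion) equations. -/
structure Interp (W : Type*) (acc : W → W → Prop) (V : Type*) (ap : V → V → V) where
  I : Ty → (ℕ → W → Set V) → W → Set V
  I_tv : ∀ A η p, WF A → IsTV A → I A η p = Set.univ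
  I_var : ∀ X η p, I (.var X) η p = η X p
  I_box : ∀ A η p, WF A → ¬ IsTV (Ty.box A) →
    I (.box A) η p = {u | ∀ q, acc p q → u ∈ I A η q}
  I_arrow : ∀ A B η p, WF A → WF B → ¬ IsTV (Ty.arrow A B) →
    I (.arrow A B) η p =
      {u | ∀ q, Relation.ReflTransGen acc p q → ∀ v ∈ I A η q, ap u v ∈ I B η q}
  I_mu : ∀ A η p, WF (Ty.mu A) → ¬ IsTV (Ty.mu A) →
    I (.mu A) η p = I (unfoldMu A) η p

/-! ### Tail finiteness and related notions -/

/-- The sets `TF^V`. -/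
inductive TFmem : Set ℕ → Ty → Prop
  | var {V : Set ℕ} {X : ℕ} : X ∉ V → TFmem V (.var X)
  | box {V : Set ℕ} {A : Ty} : TFmem V A → TFmem V (.box A)
  | arrow {V : Set ℕ} (A : Ty) {B : Ty} : TFmem V B → TFmem V (.arrow A B)
  | mu {V : Set ℕ} {A : Ty} : WF (.mu A) → TFmem ({0} ∪ (Nat.succ '' V)) A → TFmem V (.mu A)

/-- Shapes `•^{m₀}(B₁ → •^{m₁}(B₂ → ⋯ → •^{m_{n-1}}(Bₙ → •^{mₙ} X)⋯))`. -/
inductive TFShape : Ty → Prop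
  | var (X : ℕ) : TFShape (.var X)
  | box {A : Ty} : TFShape A → TFShape (.box A)
  | arrow (A : Ty) {B : Ty} : TFShape B → TFShape (.arrow A B)

/-- Tail finite type expressions. -/
def TailFinite (A : Ty) : Prop := ∃ C, TFShape C ∧ WF C ∧ TyEq false A C

-- Effectively occurring type variables, positively (`petv`) and negatively (`netv`).
mutual
  def petv : Ty → Finset ℕ
    | .var X => {X}
    | .box A => if tvAux (.box A) 0 0 then ∅ else petv A
    | .arrow A B => if tvAux (.arrow A B) 0 0 then ∅ else netv A ∪ petv B
    | .mu A =>
        if tvAux (.mu A) 0 0 then ∅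
        else if 0 ∈ netv A then ((petv A ∪ netv A).erase 0).image (· - 1)
        else ((petv A).erase 0).image (· - 1)
  def netv : Ty → Finset ℕ
    | .var _ => ∅
    | .box A => if tvAux (.box A) 0 0 then ∅ else netv A
    | .arrow A B => if tvAux (.arrow A B) 0 0 then ∅ else petv A ∪ netv B
    | .mu A =>
        if tvAux (.mu A) 0 0 then ∅
        else if 0 ∈ netv A then ((netv A ∪ petv A).erase 0).image (· - 1)
        else ((netv A).erase 0).image (· - 1)
end

/-- Positively finite type expressions. -/
def PosFin (A : Ty) : Prop :=
  ∀ (s : Bool) (B C : Ty) (X : ℕ), WF B → WF C →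
    TyEq s A (substFree B X C) → X ∈ petv B → X ∉ netv B → TailFinite C

/-- Negatively finite type expressions. -/
def NegFin (A : Ty) : Prop :=
  ∀ (s : Bool) (B C : Ty) (X : ℕ), WF B → WF C →
    TyEq s A (substFree B X C) → X ∈ netv B → X ∉ petv B → TailFinite C

/-! ### Head normal forms, maximality, normal forms -/

/-- `y N₁ … Nₙ` with every argument satisfying `P`. -/
inductive SpineArgs (P : Tm → Prop) : Tm → Prop
  | fvar (x : ℕ) : SpineArgs P (.fvar x)
  | bvar (i : ℕ) : SpineArgs P (.bvar i)
  | app {M N : Tm} : SpineArgs P M → P N → SpineArgs P (.app M N)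

/-- Head normal forms `λx₁…λxₘ. y N₁ … Nₙ` whose arguments satisfy `P`. -/
inductive HNFP (P : Tm → Prop) : Tm → Prop
  | spine {M : Tm} : SpineArgs P M → HNFP P M
  | lam {M : Tm} : HNFP P M → HNFP P (.lam M)

/-- Head normal forms. -/
def HNF : Tm → Prop := HNFP fun _ => True

/-- Maximality at a given depth. -/
def MaxAt : ℕ → Tm → Prop
  | 0, _ => True
  | n + 1, M => ∃ M', Steps M M' ∧ HNFP (MaxAt n) M'

/-- Maximal λ-terms: the Böhm tree contains no `⊥`. -/
def Maximal (M : Tm) : Prop := ∀ n, MaxAt n M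

/-- β-normal forms. -/
def NormalForm (M : Tm) : Prop := ∀ N, ¬ Step M N

/-- Type expressions without any occurrence of the modal operator `•`. -/
def NoBox : Ty → Prop
  | .var _ => True
  | .arrow A B => NoBox A ∧ NoBox B
  | .box _ => False
  | .mu A => NoBox A

/-! ### The modal logic LAμ and its Kripke semantics -/

/-- The logic LAμ (formulae are type expressions). -/
inductive LAmu : Finset Ty → Ty → Prop
  | assump {Γ : Finset Ty} {A : Ty} : LAmu (insert A Γ) A
  | nec {Γ₁ : Finset Ty} (Γ₂ : Finset Ty) {A : Ty} :
      LAmu Γ₁ A → LAmu (Γ₁.image Ty.box ∪ Γ₂) (.box A)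
  | four {Γ : Finset Ty} {A : Ty} : LAmu Γ (.box A) → LAmu Γ (.box (.box A))
  | impI {Γ : Finset Ty} {A B : Ty} : LAmu (insert A Γ) B → LAmu Γ (.arrow A B)
  | impE {Γ₁ Γ₂ : Finset Ty} {A B : Ty} :
      LAmu Γ₁ (.arrow A B) → LAmu Γ₂ A → LAmu (Γ₁ ∪ Γ₂) B
  | fold {Γ : Finset Ty} {A : Ty} : LAmu Γ (unfoldMu A) → LAmu Γ (.mu A)
  | unfold {Γ : Finset Ty} {A : Ty} : LAmu Γ (.mu A) → LAmu Γ (unfoldMu A)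
  | lrule {Γ : Finset Ty} {A B : Ty} :
      LAmu Γ (.arrow (.box A) (.box B)) → LAmu Γ (.box (.arrow A B))
  | approx {Γ : Finset Ty} {A : Ty} : LAmu Γ A → LAmu Γ (.box A)

/-- The Kripke satisfaction relation over an LA-frame `(W, tri, R)` under a valuation `ξ`,
packaged with its defining (recursion) equations. -/
structure SatFun {W : Type*} (tri R : W → W → Prop) (ξ : ℕ → W → Prop) where
  sat : Ty → W → Prop
  sat_tv : ∀ A p, WF A → IsTV A → sat A p
  sat_var : ∀ X p, sat (.var X) p ↔ ξ X p
  sat_box : ∀ A p, WF A → ¬ IsTV (Ty.box A) →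
    (sat (.box A) p ↔ ∀ q, tri p q → sat A q)
  sat_arrow : ∀ A B p, WF A → WF B → ¬ IsTV (Ty.arrow A B) →
    (sat (.arrow A B) p ↔ ∀ q, R p q → sat A q → sat B q)
  sat_mu : ∀ A p, WF (Ty.mu A) → ¬ IsTV (Ty.mu A) →
    (sat (.mu A) p ↔ sat (unfoldMu A) p)

/-! ### Auxiliary development -/

namespace Ty

def upr (f : ℕ → ℕ) : ℕ → ℕ := fun n => match n with | 0 => 0 | Nat.succ m => f m + 1
def ups (σ : ℕ → Ty) : ℕ → Ty := fun n => match n with | 0 => var 0 | Nat.succ m => shiftUp (σ m)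

theorem rename_mu (f : ℕ → ℕ) (A : Ty) : rename f (mu A) = mu (rename (upr f) A) := rfl
theorem subst_mu (σ : ℕ → Ty) (A : Ty) : subst σ (mu A) = mu (subst (ups σ) A) := rfl

theorem rename_congr {f g : ℕ → ℕ} (h : ∀ n, f n = g n) (A : Ty) :
    rename f A = rename g A := by
  have : f = g := funext h
  rw [this]

theorem subst_congr {σ τ : ℕ → Ty} (h : ∀ n, σ n = τ n) (A : Ty) :
    subst σ A = subst τ A := by
  have : σ = τ := funext h
  rw [this]

theorem rename_rename (A : Ty) : ∀ f g : ℕ → ℕ,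
    rename f (rename g A) = rename (fun n => f (g n)) A := by
  induction A with
  | var n => intro f g; rfl
  | arrow A B ihA ihB => intro f g; simp [rename, ihA, ihB]
  | box A ih => intro f g; simp [rename, ih]
  | mu A ih =>
    intro f g
    rw [rename_mu, rename_mu, rename_mu, ih]
    congr 1
    apply rename_congr
    intro n; cases n <;> rfl

theorem subst_rename (A : Ty) : ∀ (σ : ℕ → Ty) (f : ℕ → ℕ),
    subst σ (rename f A) = subst (fun n => σ (f n)) A := by
  induction A with
  | var n => intro σ f; rfl
  | arrow A B ihA ihB => intro σ f; simp [rename, subst, ihA, ihB]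
  | box A ih => intro σ f; simp [rename, subst, ih]
  | mu A ih =>
    intro σ f
    rw [rename_mu, subst_mu, subst_mu, ih]
    congr 1
    apply subst_congr
    intro n; cases n <;> rfl

theorem rename_subst (A : Ty) : ∀ (f : ℕ → ℕ) (σ : ℕ → Ty),
    rename f (subst σ A) = subst (fun n => rename f (σ n)) A := by
  induction A with
  | var n => intro f σ; rfl
  | arrow A B ihA ihB => intro f σ; simp [rename, subst, ihA, ihB]
  | box A ih => intro f σ; simp [rename, subst, ih]
  | mu A ih =>
    intro f σ
    rw [subst_mu, rename_mu, subst_mu, ih]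
    congr 1
    apply subst_congr
    intro n
    cases n with
    | zero => rfl
    | succ m =>
      show rename (upr f) (shiftUp (σ m)) = shiftUp (rename f (σ m))
      unfold shiftUp
      rw [rename_rename, rename_rename]
      apply rename_congr
      intro n; rfl

theorem subst_subst (A : Ty) : ∀ σ τ : ℕ → Ty,
    subst τ (subst σ A) = subst (fun n => subst τ (σ n)) A := by
  induction A with
  | var n => intro σ τ; rfl
  | arrow A B ihA ihB => intro σ τ; simp [subst, ihA, ihB]
  | box A ih => intro σ τ; simp [subst, ih]
  | mu A ih =>
    intro σ τ
    rw [subst_mu, subst_mu, subst_mu, ih]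
    congr 1
    apply subst_congr
    intro n
    cases n with
    | zero => rfl
    | succ m =>
      show subst (ups τ) (shiftUp (σ m)) = shiftUp (subst τ (σ m))
      unfold shiftUp
      rw [subst_rename, rename_subst]
      rfl

theorem rename_id (A : Ty) : ∀ f : ℕ → ℕ, (∀ n, f n = n) → rename f A = A := by
  induction A with
  | var n => intro f h; simp [rename, h]
  | arrow A B ihA ihB => intro f h; simp [rename, ihA _ h, ihB _ h]
  | box A ih => intro f h; simp [rename, ih _ h]
  | mu A ih =>
    intro f h
    rw [rename_mu, ih]
    intro n; cases n with
    | zero => rfl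
    | succ m => show f m + 1 = m + 1; rw [h]

end Ty

theorem rename_top (f : ℕ → ℕ) : Ty.rename f tyTop = tyTop := rfl
theorem subst_top (σ : ℕ → Ty) : Ty.subst σ tyTop = tyTop := rfl

/-- The substitution underlying `openT _ B` pushed under `c` binders. -/
def osub (B : Ty) (c : ℕ) : ℕ → Ty := fun n =>
  if n < c then .var n else if n = c then Ty.rename (· + c) B else .var (n - 1)

theorem ups_osub (B : Ty) (c : ℕ) : Ty.ups (osub B c) = osub B (c + 1) := by
  funext n
  cases n with
  | zero => simp [Ty.ups, osub]
  | succ m =>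
    show Ty.shiftUp (osub B c m) = osub B (c+1) (m+1)
    unfold osub
    rcases Nat.lt_trichotomy m c with h | h | h
    · simp only [if_pos h, if_pos (by omega : m + 1 < c + 1)]
      rfl
    · subst h
      rw [if_neg (lt_irrefl m), if_pos rfl, if_neg (by omega : ¬ m + 1 < m + 1),
        if_pos rfl]
      unfold Ty.shiftUp
      rw [Ty.rename_rename]
      apply Ty.rename_congr
      intro n; show n + m + 1 = n + (m+1); omega
    · rw [if_neg (by omega), if_neg (by omega), if_neg (by omega), if_neg (by omega)]
      show Ty.shiftUp (.var (m-1)) = .var (m + 1 - 1)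
      unfold Ty.shiftUp
      show Ty.var (m - 1 + 1) = Ty.var (m + 1 - 1)
      congr 1; omega

theorem openT_osub (A B : Ty) : openT A B = Ty.subst (osub B 0) A := by
  unfold openT
  apply Ty.subst_congr
  intro n
  cases n with
  | zero =>
    show B = osub B 0 0
    show B = if (0:ℕ) < 0 then Ty.var 0 else if (0:ℕ) = 0 then Ty.rename (· + 0) B else Ty.var (0 - 1)
    rw [if_neg (lt_irrefl 0), if_pos rfl]
    exact (Ty.rename_id B _ (fun n => by omega)).symm
  | succ m =>
    show Ty.var m = osub B 0 (m+1)
    simp [osub]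

abbrev osubT (c : ℕ) : ℕ → Ty := osub tyTop c

theorem open_subst (A E : Ty) (c : ℕ) :
    Ty.subst (osubT c) (openT A E) =
      openT (Ty.subst (osubT (c+1)) A) (Ty.subst (osubT c) E) := by
  rw [openT_osub, openT_osub, Ty.subst_subst, Ty.subst_subst]
  apply Ty.subst_congr
  intro n
  cases n with
  | zero =>
    show Ty.subst (osubT c) (osub E 0 0) = Ty.subst (osub _ 0) (osubT (c+1) 0)
    have h0 : osub E 0 0 = E := by
      show (if (0:ℕ) < 0 then Ty.var 0 else if (0:ℕ) = 0 then Ty.rename (· + 0) E else Ty.var (0 - 1)) = E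
      rw [if_neg (lt_irrefl 0), if_pos rfl]
      exact Ty.rename_id E _ (fun n => by omega)
    have h1 : osubT (c+1) 0 = Ty.var 0 := by simp [osub]
    have h2 : osub (Ty.subst (osubT c) E) 0 0 = Ty.subst (osubT c) E := by
      show (if (0:ℕ) < 0 then Ty.var 0 else if (0:ℕ) = 0 then Ty.rename (· + 0) _ else Ty.var (0 - 1)) = _
      rw [if_neg (lt_irrefl 0), if_pos rfl]
      exact Ty.rename_id _ _ (fun n => by omega)
    rw [h0, h1]
    show Ty.subst (osubT c) E = osub (Ty.subst (osubT c) E) 0 0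
    rw [h2]
  | succ m =>
    show Ty.subst (osubT c) (osub E 0 (m+1)) = Ty.subst (osub _ 0) (osubT (c+1) (m+1))
    have h0 : osub E 0 (m+1) = Ty.var m := by simp [osub]
    rw [h0]
    show osubT c m = Ty.subst (osub _ 0) (osubT (c+1) (m+1))
    unfold osubT osub
    rcases Nat.lt_trichotomy m c with h | h | h
    · rw [if_pos h, if_pos (by omega : m + 1 < c + 1)]
      show Ty.var m = osub _ 0 (m+1)
      simp [osub]
    · subst h
      rw [if_neg (by omega), if_pos rfl, if_neg (by omega), if_pos rfl]
      rw [rename_top, rename_top, subst_top]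
    · rw [if_neg (by omega), if_neg (by omega), if_neg (by omega), if_neg (by omega)]
      show Ty.var (m-1) = Ty.subst (osub _ 0) (Ty.var (m + 1 - 1))
      have : m + 1 - 1 = (m - 1) + 1 := by omega
      rw [this]
      simp [Ty.subst, osub]

/-- Tail data of a type expression: number of `μ`s on the tail, the raw de Bruijn index of the
tail variable, the number of `•`s on the tail, and (if any) the number of `μ`s preceding the
last `•` on the tail. -/
structure TD where
  k : ℕ
  j : ℕ
  b : ℕ
  o : Option ℕ

def tD : Ty → TD
  | .var j => ⟨0, j, 0, none⟩
  | .arrow _ B => tD B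
  | .box A => ⟨(tD A).k, (tD A).j, (tD A).b + 1, some ((tD A).o.getD 0)⟩
  | .mu A => ⟨(tD A).k + 1, (tD A).j, (tD A).b, (tD A).o.map (· + 1)⟩

theorem tvAux_eq (A : Ty) : ∀ d t : ℕ,
    tvAux A d t = decide (d + (tD A).k - ((tD A).o.elim t (fun m => d + m)) ≤ (tD A).j
      ∧ (tD A).j < d + (tD A).k) := by
  induction A with
  | var n => intro d t; simp [tvAux, tD]
  | arrow A B ihA ihB => intro d t; exact ihB d t
  | box A ih =>
    intro d t
    show tvAux A d d = _
    rw [ih d d, decide_eq_decide]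
    rcases h : (tD A).o with _ | m <;> simp [tD, h] <;> omega
  | mu A ih =>
    intro d t
    show tvAux A (d+1) t = _
    rw [ih (d+1) t, decide_eq_decide]
    rcases h : (tD A).o with _ | m <;> simp [tD, h] <;> omega

/-- The ⊤-variant condition in terms of tail data. -/
def TVd (d : TD) : Prop :=
  match d.o with
  | none => False
  | some m => d.k - m ≤ d.j ∧ d.j < d.k

theorem isTV_iff (A : Ty) : IsTV A ↔ TVd (tD A) := by
  show tvAux A 0 0 = true ↔ _
  rw [tvAux_eq A 0 0, decide_eq_true_iff]
  rcases h : (tD A).o with _ | m <;> simp [TVd, h] <;> omega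

@[simp] theorem tD_var (n : ℕ) : tD (.var n) = ⟨0, n, 0, none⟩ := rfl
@[simp] theorem tD_arrow (A B : Ty) : tD (.arrow A B) = tD B := rfl
@[simp] theorem tD_box (A : Ty) :
    tD (.box A) = ⟨(tD A).k, (tD A).j, (tD A).b + 1, some ((tD A).o.getD 0)⟩ := rfl
@[simp] theorem tD_mu (A : Ty) :
    tD (.mu A) = ⟨(tD A).k + 1, (tD A).j, (tD A).b, (tD A).o.map (· + 1)⟩ := rfl

theorem tD_inv (A : Ty) :
    ((tD A).o = none → (tD A).b = 0) ∧
      (∀ m, (tD A).o = some m → m ≤ (tD A).k ∧ 1 ≤ (tD A).b) := by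
  induction A with
  | var n => simp
  | arrow A B ihA ihB => exact ihB
  | box A ih =>
    constructor
    · intro h; simp at h
    · intro m h
      simp only [tD_box, Option.some.injEq] at h
      subst h
      simp only [tD_box]
      refine ⟨?_, by omega⟩
      rcases h2 : (tD A).o with _ | m'
      · simp [h2]
      · simp only [h2, Option.getD_some]
        exact (ih.2 m' h2).1
  | mu A ih =>
    rcases h2 : (tD A).o with _ | m'
    · have hb := ih.1 h2
      constructor
      · intro _; simp [hb]
      · intro m h; simp [h2] at h
    · have hm := ih.2 m' h2
      constructor
      · intro h; simp [h2] at h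
      · intro m h
        simp only [tD_mu, h2, Option.map_some, Option.some.injEq] at h
        simp only [tD_mu]
        omega

theorem tD_rename (A : Ty) : ∀ f : ℕ → ℕ,
    tD (Ty.rename f A) =
      ⟨(tD A).k, if (tD A).j < (tD A).k then (tD A).j else f ((tD A).j - (tD A).k) + (tD A).k,
        (tD A).b, (tD A).o⟩ := by
  induction A with
  | var n => intro f; simp [Ty.rename]
  | arrow A B ihA ihB => intro f; exact ihB f
  | box A ih => intro f; rw [Ty.rename, tD_box, tD_box, ih]
  | mu A ih =>
    intro f
    rw [Ty.rename_mu, tD_mu, tD_mu, ih (Ty.upr f)]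
    dsimp only
    congr 1
    rcases Nat.lt_trichotomy (tD A).j (tD A).k with h | h | h
    · rw [if_pos h, if_pos (by omega)]
    · rw [if_neg (by omega), if_pos (by omega)]
      have h1 : (tD A).j - (tD A).k = 0 := by omega
      rw [h1]
      show 0 + (tD A).k = (tD A).j
      omega
    · rw [if_neg (by omega), if_neg (by omega)]
      have h1 : (tD A).j - (tD A).k = ((tD A).j - ((tD A).k + 1)) + 1 := by omega
      rw [h1]
      show f _ + 1 + (tD A).k = f _ + ((tD A).k + 1)
      omega

theorem tD_subst_bound (A : Ty) : ∀ (σ : ℕ → Ty) (c : ℕ),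
    (∀ n, n < c → σ n = Ty.var n) → (tD A).j < (tD A).k + c →
    tD (Ty.subst σ A) = tD A := by
  induction A with
  | var n =>
    intro σ c h hj
    show tD (σ n) = tD (.var n)
    rw [h n (by simpa using hj)]
  | arrow A B ihA ihB => intro σ c h hj; exact ihB σ c h hj
  | box A ih =>
    intro σ c h hj
    show tD (.box (Ty.subst σ A)) = _
    simp only [tD_box, ih σ c h (by simpa using hj)]
  | mu A ih =>
    intro σ c h hj
    rw [Ty.subst_mu]
    simp only [tD_mu] at hj ⊢
    rw [ih (Ty.ups σ) (c+1) ?_ (by omega)]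
    intro n hn
    cases n with
    | zero => rfl
    | succ m =>
      show Ty.shiftUp (σ m) = Ty.var (m+1)
      rw [h m (by omega)]
      rfl

theorem tv_subst {A : Ty} (σ : ℕ → Ty) (h : IsTV A) : IsTV (Ty.subst σ A) := by
  rw [isTV_iff] at h ⊢
  rcases h2 : (tD A).o with _ | m
  · simp [TVd, h2] at h
  · simp only [TVd, h2] at h
    rw [tD_subst_bound A σ 0 (fun n hn => absurd hn (by omega)) (by omega)]
    simp only [TVd, h2]
    exact h

theorem TVd_some {k j b m : ℕ} : TVd ⟨k, j, b, some m⟩ ↔ (k - m ≤ j ∧ j < k) := Iff.rfl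
theorem TVd_none {k j b : ℕ} : ¬ TVd ⟨k, j, b, none⟩ := fun h => h

theorem tD_open (A : Ty) : ∀ (B : Ty) (c : ℕ),
    tD (Ty.subst (osub B c) A) =
      if (tD A).j < (tD A).k + c then tD A
      else if (tD A).j = (tD A).k + c then
        ⟨(tD A).k + (tD B).k,
          if (tD B).j < (tD B).k then (tD B).j else (tD B).j + ((tD A).k + c),
          (tD A).b + (tD B).b,
          match (tD B).o with
          | some m => some ((tD A).k + m)
          | none => (tD A).o⟩
      else ⟨(tD A).k, (tD A).j - 1, (tD A).b, (tD A).o⟩ := by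
  induction A with
  | var n =>
    intro B c
    show tD (osub B c n) = _
    unfold osub
    rw [tD_var n]
    dsimp only
    rcases Nat.lt_trichotomy n c with h | h | h
    · rw [if_pos h, if_pos (by omega)]
      simp
    · subst h
      rw [if_neg (lt_irrefl n), if_pos rfl, if_neg (by omega), if_pos (by omega), tD_rename]
      rcases ho : (tD B).o with _ | m <;>
        simp only [ho] <;>
        split_ifs <;>
        simp only [TD.mk.injEq] <;>
        refine ⟨?_, ?_, ?_, ?_⟩ <;>
        first
          | trivial
          | omega
          | (simp only [Option.some.injEq]; omega)
    · rw [if_neg (by omega), if_neg (by omega), if_neg (by omega), if_neg (by omega)]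
      simp
  | arrow A B ihA ihB => intro B' c; exact ihB B' c
  | box A ih =>
    intro B c
    show tD (.box (Ty.subst (osub B c) A)) = _
    rw [tD_box, tD_box, ih B c]
    dsimp only
    rcases ho : (tD B).o with _ | m <;>
      simp only [ho] <;>
      split_ifs <;>
      first
        | rfl
        | (exfalso; omega)
        | (simp only [TD.mk.injEq, Option.map_some, Option.map_none, Option.some.injEq,
             Option.getD_some, Option.getD_none]
           refine ⟨?_, ?_, ?_, ?_⟩ <;>
           first
             | trivial
             | omega
             | (simp only [Option.map_some, Option.map_none, Option.some.injEq]; omega)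
             | simp)
  | mu A ih =>
    intro B c
    rw [Ty.subst_mu, ups_osub]
    rw [tD_mu, tD_mu, ih B (c+1)]
    dsimp only
    rcases ho : (tD B).o with _ | m <;>
      simp only [ho] <;>
      split_ifs <;>
      first
        | rfl
        | (exfalso; omega)
        | (simp only [TD.mk.injEq, Option.map_some, Option.map_none, Option.some.injEq,
             Option.getD_some, Option.getD_none]
           refine ⟨?_, ?_, ?_, ?_⟩ <;>
           first
             | trivial
             | omega
             | (simp only [Option.map_some, Option.map_none, Option.some.injEq]; omega)
             | simp)
def taud : TD → Option (ℕ × ℕ)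
  | ⟨k, j, b, none⟩ => some (b, j - k)
  | ⟨k, j, b, some m⟩ => if k - m ≤ j ∧ j < k then none else some (b, j - k)

theorem taud_none (k j b : ℕ) : taud ⟨k, j, b, none⟩ = some (b, j - k) := rfl
theorem taud_some (k j b m : ℕ) :
    taud ⟨k, j, b, some m⟩ = if k - m ≤ j ∧ j < k then none else some (b, j - k) := rfl

def tau (A : Ty) : Option (ℕ × ℕ) := taud (tD A)

theorem tD_openT (C D : Ty) : tD (openT C D) =
    if (tD C).j < (tD C).k then tD C
    else if (tD C).j = (tD C).k then
      ⟨(tD C).k + (tD D).k,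
        if (tD D).j < (tD D).k then (tD D).j else (tD D).j + (tD C).k,
        (tD C).b + (tD D).b,
        match (tD D).o with
        | some m => some ((tD C).k + m)
        | none => (tD C).o⟩
    else ⟨(tD C).k, (tD C).j - 1, (tD C).b, (tD C).o⟩ := by
  rw [openT_osub, tD_open C D 0]
  simp only [Nat.add_zero]

theorem proper_tail (C : Ty) : ∀ X : ℕ, Proper C X → (tD C).j = (tD C).k + X →
    (tD C).o ≠ none := by
  induction C with
  | var n =>
    intro X hP hj
    simp only [tD_var] at hj
    exact absurd (by omega : n = X) hP
  | box A ih => intro X hP hj; simp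
  | arrow A B ihA ihB =>
    intro X hP hj
    rcases hP with ⟨_, hB⟩ | hTV
    · exact ihB X hB hj
    · rw [isTV_iff] at hTV
      rcases ho : (tD B).o with _ | m
      · simp only [TVd, ho] at hTV
      · show (tD B).o ≠ none
        simp [ho]
  | mu A ih =>
    intro X hP hj
    simp only [tD_mu] at hj ⊢
    rcases hP with hPA | hTV
    · have h2 := ih (X+1) hPA (by omega)
      rcases ho : (tD A).o with _ | m
      · exact absurd ho h2
      · simp [ho]
    · rw [isTV_iff] at hTV
      simp only [TVd, tD_mu] at hTV
      rcases ho : (tD A).o with _ | m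
      · simp only [ho, Option.map_none] at hTV
      · simp [ho]

theorem tau_box (A : Ty) : tau (.box A) = (tau A).map (fun p => (p.1 + 1, p.2)) := by
  unfold tau
  rcases hA : tD A with ⟨k, j, b, o⟩
  rw [tD_box, hA]
  dsimp only
  rcases o with _ | m
  · simp only [Option.getD_none, taud_none, taud_some, Option.map_some]
    rw [if_neg (by omega)]
  · simp only [Option.getD_some, taud_some]
    split_ifs <;> simp

theorem tau_fix (A : Ty) : tau (Ty.mu A) = tau (openT A (Ty.mu A)) := by
  have hinv := tD_inv A
  have hO := tD_openT A (Ty.mu A)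
  unfold tau
  rcases hA : tD A with ⟨k, j, b, o⟩
  rw [hA] at hinv
  rw [tD_mu, hA] at hO
  rw [hO, tD_mu, hA]
  dsimp only at *
  rcases o with _ | m
  · have hb : b = 0 := hinv.1 rfl
    simp only [Option.map_none]
    split_ifs <;> simp only [taud_none] <;> (try split_ifs) <;>
      first
        | rfl
        | (exfalso; omega)
        | (simp only [Option.some.injEq, Prod.mk.injEq, true_and, and_true]; omega)
  · have hm := hinv.2 m rfl
    simp only [Option.map_some]
    split_ifs <;> simp only [taud_none, taud_some] <;> (try split_ifs) <;>
      first
        | rfl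
        | (exfalso; omega)
        | (simp only [Option.some.injEq, Prod.mk.injEq, true_and, and_true]; omega)

theorem tau_uniq {A C : Ty} (hP : Proper C 0) (h : tau A = tau (openT C A)) :
    tau A = tau (Ty.mu C) := by
  have hO := tD_openT C A
  have hinvC := tD_inv C
  have hinvA := tD_inv A
  have htail := proper_tail C 0 hP
  rcases hC : tD C with ⟨k, j, b, o⟩
  rw [hC] at hO hinvC htail
  unfold tau at h ⊢
  rw [hO] at h
  rw [tD_mu, hC]
  dsimp only at *
  rcases Nat.lt_trichotomy j k with hj | hj | hj
  · rw [if_pos hj] at h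
    rw [h]
    rcases o with _ | m <;>
      simp only [Option.map_none, Option.map_some] <;>
      (try split_ifs) <;>
      simp only [taud_none, taud_some] <;>
      (try split_ifs) <;>
      first
        | rfl
        | (exfalso; omega)
        | (simp only [Option.some.injEq, Prod.mk.injEq, true_and, and_true]; omega)
  · rcases o with _ | m
    · exact absurd rfl (htail (by omega))
    · have hm := hinvC.2 m rfl
      have hmu : taud ⟨k + 1, j, b, Option.map (· + 1) (some m)⟩ = none := by
        simp only [Option.map_some, taud_some]
        rw [if_pos (by omega)]
      rw [hmu]
      rw [if_neg (by omega), if_pos (by omega)] at h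
      rcases hA : tD A with ⟨kA, jA, bA, oA⟩
      rw [hA] at h hinvA
      dsimp only at *
      rcases oA with _ | mA
      · exfalso
        simp only [taud_none, taud_some] at h
        split_ifs at h <;>
          first
            | (simp only [Option.some.injEq, Prod.mk.injEq, true_and, and_true] at h; omega)
            | simp at h
      · by_cases hTVA : kA - mA ≤ jA ∧ jA < kA
        · simp only [taud_some]
          rw [if_pos hTVA]
        · exfalso
          simp only [taud_some] at h
          rw [if_neg hTVA] at h
          split_ifs at h <;>
            first
              | (simp only [Option.some.injEq, Prod.mk.injEq, true_and, and_true] at h; omega)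
              | simp at h
  · rw [if_neg (by omega), if_neg (by omega)] at h
    rw [h]
    rcases o with _ | m <;>
      simp only [Option.map_none, Option.map_some, taud_none, taud_some] <;>
      (try split_ifs) <;>
      first
        | rfl
        | (exfalso; omega)
        | (simp only [Option.some.injEq, Prod.mk.injEq, true_and, and_true]; omega)

theorem tau_top : tau tyTop = none := by
  unfold tau tyTop
  simp only [tD_mu, tD_box, tD_var]
  simp only [Option.getD_none, Option.map_some, taud_some]
  rw [if_pos (by omega)]

theorem tyEq_tau {s : Bool} {A B : Ty} (h : TyEq s A B) : tau A = tau B := by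
  induction h with
  | refl s A => rfl
  | symm _ ih => exact ih.symm
  | trans _ _ ih1 ih2 => exact ih1.trans ih2
  | boxCongr _ ih => rw [tau_box, tau_box, ih]
  | arrowCongr _ _ ih1 ih2 => exact ih2
  | arrowTop s A => rfl
  | fix s A => exact tau_fix A
  | uniq _ hP ih => exact tau_uniq hP ih
  | kl A B => rfl

theorem tv_of_eq_top {s : Bool} {A : Ty} (h : TyEq s A tyTop) : IsTV A := by
  have ht := tyEq_tau h
  rw [tau_top] at ht
  rw [isTV_iff]
  unfold tau at ht
  rcases hA : tD A with ⟨k, j, b, o⟩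
  rw [hA] at ht
  rcases o with _ | m
  · simp [taud_none] at ht
  · simp only [taud_some] at ht
    split_ifs at ht with hc
    exact hc

/-! ### The forward direction -/

theorem top_box (s : Bool) : TyEq s tyTop (.box tyTop) := TyEq.fix s (.box (.var 0))

/-- Tail length. -/
def tlen : Ty → ℕ
  | .var _ => 0
  | .arrow _ B => tlen B + 1
  | .box A => tlen A + 1
  | .mu A => tlen A + 1

/-- Type expressions whose tail ends in a literal `⊤`. -/
inductive ET : Ty → Prop
  | top : ET tyTop
  | box {A : Ty} : ET A → ET (.box A)
  | arrow (A : Ty) {B : Ty} : ET B → ET (.arrow A B)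
  | mu {A : Ty} : ET A → ET (.mu A)

theorem et_subst {A : Ty} (h : ET A) : ∀ σ, ET (Ty.subst σ A) := by
  induction h with
  | top => intro σ; rw [subst_top]; exact ET.top
  | box _ ih => intro σ; exact ET.box (ih σ)
  | arrow A _ ih => intro σ; exact ET.arrow _ (ih σ)
  | mu _ ih => intro σ; rw [Ty.subst_mu]; exact ET.mu (ih _)

theorem et_tlen_subst {A : Ty} (h : ET A) : ∀ σ, tlen (Ty.subst σ A) = tlen A := by
  induction h with
  | top => intro σ; rw [subst_top]
  | box _ ih => intro σ; show tlen (.box _) = _; simp [tlen, ih σ]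
  | arrow A _ ih => intro σ; show tlen (.arrow _ _) = _; simp [tlen, ih σ]
  | mu _ ih => intro σ; rw [Ty.subst_mu]; show tlen (.mu _) = _; simp [tlen, ih _]

theorem et_tv {A : Ty} (h : ET A) : IsTV A := by
  induction h with
  | top => rfl
  | @box A hA ih =>
    rw [isTV_iff] at ih ⊢
    rcases ho : (tD A).o with _ | m
    · simp only [TVd, ho] at ih
    · simp only [TVd, tD_box, ho, Option.getD_some] at ih ⊢
      exact ih
  | arrow A hB ih => exact ih
  | @mu A hA ih =>
    rw [isTV_iff] at ih ⊢
    rcases ho : (tD A).o with _ | m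
    · simp only [TVd, ho] at ih
    · simp only [TVd, tD_mu, ho, Option.map_some] at ih ⊢
      omega

theorem et_proper {A : Ty} (h : ET A) : ∀ X, Proper A X := by
  induction h with
  | top => intro X; exact Or.inl trivial
  | box _ _ => intro X; trivial
  | arrow A hB _ => intro X; exact Or.inr (et_tv hB)
  | mu hA _ => intro X; exact Or.inr (et_tv (ET.mu hA))

theorem et_top_eq (s : Bool) : ∀ (n : ℕ) (A : Ty), tlen A ≤ n → ET A → TyEq s A tyTop := by
  intro n
  induction n with
  | zero =>
    intro A hl hET
    cases hET <;> simp [tyTop, tlen] at hl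
  | succ n ih =>
    intro A hl hET
    cases hET with
    | top => exact TyEq.refl s tyTop
    | @box A h =>
      refine TyEq.trans (TyEq.boxCongr (ih A ?_ h)) (TyEq.symm (top_box s))
      simp [tlen] at hl; omega
    | @arrow A B h =>
      refine TyEq.trans (TyEq.arrowCongr (TyEq.refl s A) (ih B ?_ h)) (TyEq.arrowTop s A)
      simp [tlen] at hl; omega
    | @mu A h =>
      have h1 : ET (Ty.subst (osubT 0) A) := et_subst h _
      have h2 : tlen (Ty.subst (osubT 0) A) ≤ n := by
        rw [et_tlen_subst h]
        simp [tlen] at hl; omega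
      have h3 : TyEq s (Ty.subst (osubT 0) A) tyTop := ih _ h2 h1
      have h4 : Ty.subst (osubT 0) A = openT A tyTop := (openT_osub A tyTop).symm
      rw [h4] at h3
      exact TyEq.symm (TyEq.uniq (TyEq.symm h3) (et_proper h 0))

theorem et_hit (A : Ty) : ∀ c : ℕ, (tD A).j = (tD A).k + c → ET (Ty.subst (osubT c) A) := by
  induction A with
  | var n =>
    intro c h
    simp only [tD_var] at h
    show ET (osub tyTop c n)
    unfold osub
    rw [if_neg (by omega), if_pos (by omega), rename_top]
    exact ET.top
  | arrow A B ihA ihB =>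
    intro c h
    exact ET.arrow _ (ihB c h)
  | box A ih =>
    intro c h
    exact ET.box (ih c h)
  | mu A ih =>
    intro c h
    simp only [tD_mu] at h
    rw [Ty.subst_mu, ups_osub]
    exact ET.mu (ih (c+1) (by omega))

theorem proper_osubT (A : Ty) : ∀ X c : ℕ, X < c → Proper A X →
    Proper (Ty.subst (osubT c) A) X := by
  induction A with
  | var n =>
    intro X c hXc hP
    show Proper (osub tyTop c n) X
    unfold osub
    rcases Nat.lt_trichotomy n c with h | h | h
    · rw [if_pos h]
      exact hP
    · rw [if_neg (by omega), if_pos h, rename_top]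
      exact Or.inl trivial
    · rw [if_neg (by omega), if_neg (by omega)]
      show n - 1 ≠ X
      omega
  | box A ih => intro X c hXc hP; trivial
  | arrow A B ihA ihB =>
    intro X c hXc hP
    rcases hP with ⟨hA, hB⟩ | hTV
    · exact Or.inl ⟨ihA X c hXc hA, ihB X c hXc hB⟩
    · exact Or.inr (tv_subst _ hTV)
  | mu A ih =>
    intro X c hXc hP
    rw [Ty.subst_mu, ups_osub]
    rcases hP with hA | hTV
    · exact Or.inl (ih (X+1) (c+1) (by omega) hA)
    · refine Or.inr ?_
      have := tv_subst (osubT c) hTV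
      rw [Ty.subst_mu, ups_osub] at this
      exact this

theorem tyEq_subst {s : Bool} {A B : Ty} (h : TyEq s A B) :
    ∀ c, TyEq s (Ty.subst (osubT c) A) (Ty.subst (osubT c) B) := by
  induction h with
  | refl s A => intro c; exact TyEq.refl _ _
  | symm _ ih => intro c; exact TyEq.symm (ih c)
  | trans _ _ ih1 ih2 => intro c; exact TyEq.trans (ih1 c) (ih2 c)
  | boxCongr _ ih => intro c; exact TyEq.boxCongr (ih c)
  | arrowCongr _ _ ih1 ih2 => intro c; exact TyEq.arrowCongr (ih1 c) (ih2 c)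
  | arrowTop s A =>
    intro c
    show TyEq s (.arrow (Ty.subst (osubT c) A) (Ty.subst (osubT c) tyTop)) (Ty.subst (osubT c) tyTop)
    rw [subst_top]
    exact TyEq.arrowTop s _
  | fix s A =>
    intro c
    show TyEq s (Ty.subst (osubT c) (.mu A)) (Ty.subst (osubT c) (openT A (.mu A)))
    rw [open_subst, Ty.subst_mu, ups_osub]
    exact TyEq.fix s _
  | @uniq s A C _ hP ih =>
    intro c
    show TyEq s (Ty.subst (osubT c) A) (Ty.subst (osubT c) (.mu C))
    rw [Ty.subst_mu, ups_osub]
    apply TyEq.uniq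
    · have h2 := ih c
      rw [open_subst] at h2
      exact h2
    · exact proper_osubT C 0 (c+1) (by omega) hP
  | kl A B => intro c; exact TyEq.kl _ _

theorem tv_eq_top {s : Bool} : ∀ (A : Ty), WF A → IsTV A → TyEq s A tyTop := by
  intro A
  induction A with
  | var n =>
    intro _ h
    rw [isTV_iff] at h
    simp only [TVd, tD_var] at h
  | arrow A B ihA ihB =>
    intro hWF hTV
    have hB : IsTV B := hTV
    exact TyEq.trans (TyEq.arrowCongr (TyEq.refl s A) (ihB hWF.2 hB)) (TyEq.arrowTop s A)
  | box A ih =>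
    intro hWF hTV
    have hA : IsTV A := by
      rw [isTV_iff] at hTV ⊢
      rcases ho : (tD A).o with _ | m
      · simp only [TVd, tD_box, ho, Option.getD_none] at hTV
        exact absurd hTV (by omega)
      · simp only [TVd, tD_box, ho, Option.getD_some] at hTV
        simp only [TVd, ho]
        exact hTV
    exact TyEq.trans (TyEq.boxCongr (ih hWF hA)) (TyEq.symm (top_box s))
  | mu B ih =>
    intro hWF hTV
    rw [isTV_iff] at hTV
    rcases ho : (tD B).o with _ | m
    · simp only [TVd, tD_mu, ho, Option.map_none] at hTV
    · simp only [TVd, tD_mu, ho, Option.map_some] at hTV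
      rcases Nat.lt_trichotomy (tD B).j (tD B).k with hj | hj | hj
      · have hTVB : IsTV B := by
          rw [isTV_iff]
          simp only [TVd, ho]
          omega
        have h1 : TyEq s B tyTop := ih hWF.1 hTVB
        have h2 := tyEq_subst h1 0
        rw [subst_top] at h2
        rw [← openT_osub] at h2
        exact TyEq.symm (TyEq.uniq (TyEq.symm h2) hWF.2)
      · have hET : ET (openT B tyTop) := by
          rw [openT_osub]
          exact et_hit B 0 (by omega)
        have h2 : TyEq s (openT B tyTop) tyTop :=
          et_top_eq s (tlen (openT B tyTop)) _ le_rfl hET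
        exact TyEq.symm (TyEq.uniq (TyEq.symm h2) hWF.2)
      · exact absurd hTV (by omega)

/-- A type expression is a ⊤-variant iff it is equivalent to `⊤`
(both for `≅`, i.e. `s = false`, and for `≃`, i.e. `s = true`). -/
theorem statement12 (s : Bool) (A : Ty) (hA : WF A) :
    IsTV A ↔ TyEq s A tyTop :=
  ⟨fun h => tv_eq_top A hA h, fun h => tv_of_eq_top h⟩

end LambdaA
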